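/- Let f^{(i)}_{α,β}(y) = c(i,n) β (y/α)^{iβ-1} / (α(1+(y/α)^β)^{n+1}) for y > 0, with c(i,n) = n!/((n-i)!(i-1)!), α, β > 0, 1 ≤ i ≤ n, and τ > 0. If iβτ + iβ - τ > 0, then ∫₀^∞ (f^{(i)}_{α,β}(y))^{τ+1} dy = c(i,n)^{τ+1} (β/α)^τ · B( ((n-i+1)τβ + (n-i+1)β + τ)/β , (iβτ + iβ - τ)/β ). -/

import Mathlib

open MeasureTheory Set

/-- The Beta function `B(a,b) = ∫₀¹ x^(a-1) (1-x)^(b-1) dx`. -/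
noncomputable def Beta (a b : ℝ) : ℝ := ∫ x in Ioo (0:ℝ) 1, x ^ (a-1) * (1-x) ^ (b-1)

/-- `c(i,n) = n! / ((n-i)! (i-1)!)`. -/
noncomputable def cCoef (i n : ℕ) : ℝ :=
  (Nat.factorial n : ℝ) / ((Nat.factorial (n - i) : ℝ) * (Nat.factorial (i - 1) : ℝ))

/-- The density of the `i`-th order statistic of a log-logistic sample of size `n`. -/
noncomputable def fOrd (α β : ℝ) (n i : ℕ) (y : ℝ) : ℝ :=
  cCoef i n * β * (y/α) ^ ((i : ℝ) * β - 1) / (α * (1 + (y/α) ^ β) ^ (n + 1))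

lemma beta_eq_integral_Ioi (a b : ℝ) :
    (∫ t in Ioi (0:ℝ), t ^ (a-1) * (1+t) ^ (-(a+b))) = Beta b a := by
  have himg : (fun x : ℝ => (1-x)/x) '' Ioo 0 1 = Ioi 0 := by
    ext t
    constructor
    · rintro ⟨x, ⟨hx0, hx1⟩, rfl⟩
      exact div_pos (by linarith) hx0
    · intro ht
      have ht' : (0:ℝ) < t := ht
      have h1t : (0:ℝ) < 1 + t := by linarith
      refine ⟨1/(1+t), ⟨by positivity, ?_⟩, ?_⟩
      · rw [div_lt_one h1t]; linarith
      · field_simp; ring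
  have hd : ∀ x ∈ Ioo (0:ℝ) 1, HasDerivWithinAt (fun x : ℝ => (1-x)/x)
      (-(1/x^2)) (Ioo 0 1) x := by
    intro x hx
    have hx0 : (0:ℝ) < x := hx.1
    have h : HasDerivAt (fun x : ℝ => (1-x)/x) (((-1) * x - (1-x) * 1)/x^2) x := by
      exact (((hasDerivAt_id x).const_sub 1).div (hasDerivAt_id x) hx0.ne')
    have : ((-1) * x - (1-x) * 1)/x^2 = -(1/x^2) := by field_simp; ring
    rw [this] at h
    exact h.hasDerivWithinAt
  have hinj : InjOn (fun x : ℝ => (1-x)/x) (Ioo 0 1) := by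
    intro x hx y hy hxy
    simp only at hxy
    rw [div_eq_div_iff hx.1.ne' hy.1.ne'] at hxy
    nlinarith [hxy]
  rw [← himg, integral_image_eq_integral_abs_deriv_smul measurableSet_Ioo hd hinj, Beta]
  apply setIntegral_congr_fun measurableSet_Ioo
  intro x hx
  have hx0 : (0:ℝ) < x := hx.1
  have hx1 : (0:ℝ) < 1 - x := by linarith [hx.2]
  have h1 : 1 + (1-x)/x = 1/x := by field_simp; ring
  have e1 : |(-(1/x^2))| = x ^ (-2 : ℝ) := by
    rw [abs_neg, abs_of_pos (by positivity), Real.rpow_neg hx0.le, Real.rpow_two, one_div]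
  simp only [smul_eq_mul]
  rw [e1, h1]
  rw [Real.div_rpow hx1.le hx0.le, one_div, Real.inv_rpow hx0.le, ← Real.rpow_neg hx0.le,
    neg_neg, div_eq_mul_inv, ← Real.rpow_neg hx0.le]
  calc x ^ (-2:ℝ) * ((1-x) ^ (a-1) * x ^ (-(a-1)) * x ^ (a+b))
      = (1-x) ^ (a-1) * (x ^ (-2:ℝ) * x ^ (-(a-1)) * x ^ (a+b)) := by ring
    _ = (1-x) ^ (a-1) * x ^ (b-1) := by
        rw [← Real.rpow_add hx0, ← Real.rpow_add hx0]; ring_nf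
    _ = x ^ (b-1) * (1-x) ^ (a-1) := mul_comm _ _

theorem integral_fOrd_rpow (α β τ : ℝ) (hα : 0 < α) (hβ : 0 < β) (hτ : 0 < τ)
    (n i : ℕ) (hi1 : 1 ≤ i) (hin : i ≤ n)
    (hpos : 0 < (i : ℝ) * β * τ + i * β - τ) :
    (∫ y in Ioi (0:ℝ), (fOrd α β n i y) ^ (τ + 1))
      = cCoef i n ^ (τ + 1) * (β/α) ^ τ *
        Beta ((((n : ℝ) - i + 1) * τ * β + ((n : ℝ) - i + 1) * β + τ) / β)
             (((i : ℝ) * β * τ + i * β - τ) / β) := by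
  set m : ℝ := ((i : ℝ) * β - 1) * (τ + 1) with hm
  set p : ℝ := ((n : ℕ) + 1 : ℝ) * (τ + 1) with hp
  set a : ℝ := ((i : ℝ) * β * τ + i * β - τ) / β with ha
  set b : ℝ := (((n : ℝ) - i + 1) * τ * β + ((n : ℝ) - i + 1) * β + τ) / β with hb
  have hc : 0 ≤ cCoef i n := by
    unfold cCoef; positivity
  -- step 1: rewrite the integrand
  have step1 : ∀ y ∈ Ioi (0:ℝ), (fOrd α β n i y) ^ (τ + 1)
      = (cCoef i n ^ (τ+1) * (β/α) ^ (τ+1)) *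
        ((y/α) ^ m * (1 + (y/α) ^ β) ^ (-p)) := by
    intro y hy
    have hy0 : (0:ℝ) < y := hy
    have hu : (0:ℝ) < y / α := div_pos hy0 hα
    have h1u : (0:ℝ) < 1 + (y/α) ^ β := by positivity
    have hf : fOrd α β n i y
        = (cCoef i n * (β/α)) * ((y/α) ^ ((i:ℝ)*β-1) * (((1 + (y/α) ^ β) ^ (n+1) : ℝ))⁻¹) := by
      unfold fOrd; field_simp; try ring
    rw [hf, Real.mul_rpow (by positivity) (by positivity),
      Real.mul_rpow hc (by positivity),
      Real.mul_rpow (Real.rpow_nonneg hu.le _) (by positivity),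
      ← Real.rpow_natCast (1 + (y/α) ^ β) (n+1),
      ← Real.rpow_neg h1u.le, ← Real.rpow_mul hu.le, ← Real.rpow_mul h1u.le]
    rw [hm, hp]
    push_cast
    try ring_nf
  rw [setIntegral_congr_fun measurableSet_Ioi step1, integral_const_mul]
  -- step 2: substitution y = α * u^(1/β)
  have himg : (fun u : ℝ => α * u ^ (1/β)) '' Ioi 0 = Ioi 0 := by
    ext y
    constructor
    · rintro ⟨u, hu, rfl⟩
      have : (0:ℝ) < u := hu
      exact mul_pos hα (Real.rpow_pos_of_pos this _)
    · intro hy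
      have hy0 : (0:ℝ) < y := hy
      have hu : (0:ℝ) < (y/α) ^ β := Real.rpow_pos_of_pos (div_pos hy0 hα) _
      refine ⟨(y/α) ^ β, hu, ?_⟩
      show α * ((y/α) ^ β) ^ (1/β) = y
      rw [← Real.rpow_mul (div_pos hy0 hα).le, mul_one_div, div_self hβ.ne',
        Real.rpow_one, mul_div_cancel₀ _ hα.ne']
  have hd : ∀ u ∈ Ioi (0:ℝ), HasDerivWithinAt (fun u : ℝ => α * u ^ (1/β))
      (α * (1/β * u ^ (1/β - 1))) (Ioi 0) u := by
    intro u hu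
    have hu0 : (0:ℝ) < u := hu
    exact ((Real.hasDerivAt_rpow_const (Or.inl hu0.ne')).const_mul α).hasDerivWithinAt
  have hinj : InjOn (fun u : ℝ => α * u ^ (1/β)) (Ioi 0) := by
    intro x hx y hy hxy
    have hx0 : (0:ℝ) < x := hx
    have hy0 : (0:ℝ) < y := hy
    simp only at hxy
    have h2 : x ^ (1/β) = y ^ (1/β) := by
      exact mul_left_cancel₀ hα.ne' hxy
    have := congrArg (fun t : ℝ => t ^ β) h2
    simpa [← Real.rpow_mul hx0.le, ← Real.rpow_mul hy0.le, one_div,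
      inv_mul_cancel₀ hβ.ne'] using this
  have step2 : (∫ y in Ioi (0:ℝ), (y/α) ^ m * (1 + (y/α) ^ β) ^ (-p))
      = (α/β) * ∫ u in Ioi (0:ℝ), u ^ ((m+1)/β - 1) * (1+u) ^ (-p) := by
    nth_rewrite 1 [← himg]
    rw [integral_image_eq_integral_abs_deriv_smul measurableSet_Ioi hd hinj, ← integral_const_mul]
    apply setIntegral_congr_fun measurableSet_Ioi
    intro u hu
    have hu0 : (0:ℝ) < u := hu
    have hcan : α * u ^ (1/β) / α = u ^ (1/β) := mul_div_cancel_left₀ _ hα.ne'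
    have hub : (u ^ (1/β) : ℝ) ^ β = u := by
      rw [← Real.rpow_mul hu0.le, one_div, inv_mul_cancel₀ hβ.ne', Real.rpow_one]
    have hum : (u ^ (1/β) : ℝ) ^ m = u ^ (m/β) := by
      rw [← Real.rpow_mul hu0.le, one_div, inv_mul_eq_div]
    have habs : |α * (1/β * u ^ (1/β - 1))| = (α/β) * u ^ (1/β - 1) := by
      rw [abs_of_pos (by positivity)]; ring
    simp only [smul_eq_mul, hcan, hub, hum, habs]
    rw [show (α/β) * u ^ (1/β - 1) * (u ^ (m/β) * (1+u) ^ (-p))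
        = (α/β) * ((u ^ (1/β - 1) * u ^ (m/β)) * (1+u) ^ (-p)) by ring,
      ← Real.rpow_add hu0]
    ring_nf
  rw [step2]
  -- step 3: identify with the Beta function
  have hea : (m+1)/β = a := by
    rw [hm, ha]
    field_simp
    ring
  have heb : p = a + b := by
    rw [hp, ha, hb]
    field_simp
    ring
  rw [hea, heb, beta_eq_integral_Ioi a b,
    Real.rpow_add_one (by positivity : (β/α) ≠ 0) τ]
  field_simp
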